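/- For a graph G with at least one edge, the following are equivalent: (a) q*(G) = 0; (b) e(A,Ā) ≥ 2√(e(A)·e(Ā)) for all vertex subsets A; (c) e(A,Ā) ≥ vol(A)·vol(Ā)/vol(G) for all vertex subsets A (i.e., ĥ_G ≥ 1). -/
import Mathlib


open Finset
open scoped Classical

noncomputable section

set_option linter.unusedSectionVars false

variable {V : Type*} [Fintype V]

/-- Number of edges between `A` and `B` (each cross edge counted once when `A`,`B` disjoint). -/
def ecut (G : SimpleGraph V) (A B : Finset V) : ℝ :=
  ((A ×ˢ B).filter fun p => G.Adj p.1 p.2).card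

/-- Number of edges inside `A`. -/
def ein (G : SimpleGraph V) (A : Finset V) : ℝ := ecut G A A / 2

/-- Volume of a vertex set: sum of degrees. -/
def gvol (G : SimpleGraph V) (A : Finset V) : ℝ := ∑ v ∈ A, (G.degree v : ℝ)

/-- Number of edges of `G`. -/
def edgecount (G : SimpleGraph V) : ℝ := (G.edgeFinset.card : ℝ)

/-- Conductance (Cheeger constant) `h_G`. -/
def conduct (G : SimpleGraph V) : ℝ :=
  sInf { x | ∃ A : Finset V, A.Nonempty ∧ A ≠ univ ∧
    x = ecut G A Aᶜ / min (gvol G A) (gvol G Aᶜ) }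

/-- Expansion-by-products `ĥ_G`. -/
def hhat (G : SimpleGraph V) : ℝ :=
  sInf { x | ∃ A : Finset V, A.Nonempty ∧ A ≠ univ ∧
    x = ecut G A Aᶜ * gvol G univ / (gvol G A * gvol G Aᶜ) }

/-- Modularity score of a vertex partition. -/
def modScore (G : SimpleGraph V) (P : Finpartition (univ : Finset V)) : ℝ :=
  (∑ A ∈ P.parts, ein G A) / edgecount G
    - (∑ A ∈ P.parts, (gvol G A) ^ 2) / (4 * (edgecount G) ^ 2)

/-- Modularity `q*(G)`: maximum modularity score over vertex partitions. -/
def modularity (G : SimpleGraph V) : ℝ :=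
  sSup { x | ∃ P : Finpartition (univ : Finset V), x = modScore G P }

/-! ### Auxiliary lemmas -/

lemma ecut_nonneg (G : SimpleGraph V) (A B : Finset V) : 0 ≤ ecut G A B :=
  Nat.cast_nonneg _

lemma ein_nonneg (G : SimpleGraph V) (A : Finset V) : 0 ≤ ein G A :=
  div_nonneg (ecut_nonneg G A A) (by norm_num)

lemma gvol_nonneg (G : SimpleGraph V) (A : Finset V) : 0 ≤ gvol G A :=
  Finset.sum_nonneg fun _ _ => Nat.cast_nonneg _

lemma ecut_eq_sum (G : SimpleGraph V) (A B : Finset V) :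
    ecut G A B = ∑ v ∈ A, ((B.filter (G.Adj v)).card : ℝ) := by
  unfold ecut
  rw [show ((A ×ˢ B).filter fun p => G.Adj p.1 p.2)
      = A.biUnion (fun v => {v} ×ˢ B.filter (G.Adj v)) by
    ext ⟨a, b⟩
    simp only [mem_filter, mem_product, mem_biUnion, mem_singleton]
    constructor
    · rintro ⟨⟨ha, hb⟩, hab⟩; exact ⟨a, ha, rfl, hb, hab⟩
    · rintro ⟨v, hv, rfl, hb, hab⟩; exact ⟨⟨hv, hb⟩, hab⟩]
  rw [card_biUnion]
  · push_cast
    congr 1; ext v; rw [singleton_product, card_map]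
  · intro x hx y hy hxy
    simp only [disjoint_left]
    rintro ⟨a, b⟩ h1 h2
    simp only [mem_product, mem_singleton] at h1 h2
    exact hxy (h1.1.symm.trans h2.1)

lemma ecut_comm (G : SimpleGraph V) (A B : Finset V) : ecut G A B = ecut G B A := by
  unfold ecut
  congr 1
  apply Finset.card_bij' (fun p _ => (p.2, p.1)) (fun p _ => (p.2, p.1)) <;>
    rintro ⟨a, b⟩ h <;> simp_all [G.adj_comm]

lemma gvol_eq_ecut_univ (G : SimpleGraph V) (A : Finset V) :
    gvol G A = ecut G A univ := by
  rw [ecut_eq_sum]; unfold gvol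
  refine Finset.sum_congr rfl fun v _ => ?_
  congr 1
  rw [← SimpleGraph.card_neighborFinset_eq_degree]
  congr 1
  ext w; simp

lemma ecut_split (G : SimpleGraph V) (A : Finset V) :
    ecut G A univ = ecut G A A + ecut G A Aᶜ := by
  rw [ecut_eq_sum, ecut_eq_sum, ecut_eq_sum, ← Finset.sum_add_distrib]
  refine Finset.sum_congr rfl fun v _ => ?_
  rw [← Nat.cast_add]
  congr 1
  rw [← card_union_of_disjoint, ← filter_union, union_compl]
  exact disjoint_filter_filter disjoint_compl_right

lemma gvol_eq (G : SimpleGraph V) (A : Finset V) :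
    gvol G A = 2 * ein G A + ecut G A Aᶜ := by
  rw [gvol_eq_ecut_univ, ecut_split]; unfold ein; ring

lemma gvol_add (G : SimpleGraph V) (A : Finset V) :
    gvol G A + gvol G Aᶜ = gvol G univ :=
  Finset.sum_add_sum_compl A _

lemma handshake (G : SimpleGraph V) : gvol G univ = 2 * edgecount G := by
  unfold gvol edgecount
  rw [← Nat.cast_sum]
  rw [SimpleGraph.sum_degrees_eq_twice_card_edges]
  push_cast; ring

lemma modScore_eq_sum (G : SimpleGraph V) (P : Finpartition (univ : Finset V)) :
    modScore G P
      = ∑ A ∈ P.parts, (ein G A / edgecount G - gvol G A ^ 2 / (4 * edgecount G ^ 2)) := by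
  unfold modScore
  rw [Finset.sum_div, Finset.sum_div, ← Finset.sum_sub_distrib]

/-- The bipartition `{A, Aᶜ}`. -/
def bip (A : Finset V) (h1 : A.Nonempty) (h2 : A ≠ univ) : Finpartition (univ : Finset V) where
  parts := {A, Aᶜ}
  supIndep := by
    have hne : A ≠ Aᶜ := by
      intro h
      obtain ⟨v, hv⟩ := h1
      have hv' : v ∈ Aᶜ := h ▸ hv
      exact (Finset.mem_compl.1 hv') hv
    exact (Finset.supIndep_pair hne).2 disjoint_compl_right
  sup_parts := by
    rw [Finset.sup_insert, Finset.sup_singleton]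
    simp [sup_eq_union]
  bot_notMem := by
    simp only [bot_eq_empty, mem_insert, mem_singleton]
    push_neg
    refine ⟨fun h => h1.ne_empty h.symm, fun h => h2 ?_⟩
    rw [← compl_compl A, ← h, compl_empty]

lemma bip_parts (A : Finset V) (h1 : A.Nonempty) (h2 : A ≠ univ) :
    (bip A h1 h2).parts = {A, Aᶜ} := rfl

lemma gvol_univ_pos (G : SimpleGraph V) (hG : G.edgeFinset.Nonempty) :
    0 < edgecount G := by
  unfold edgecount
  exact_mod_cast Finset.card_pos.2 hG

/-- Key pointwise bound: the expansion condition at `A` makes the modularity term of `A`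
nonpositive. -/
lemma term_nonpos (G : SimpleGraph V) (hm : 0 < edgecount G) (A : Finset V)
    (h : gvol G A * gvol G Aᶜ / gvol G univ ≤ ecut G A Aᶜ) :
    ein G A / edgecount G - gvol G A ^ 2 / (4 * edgecount G ^ 2) ≤ 0 := by
  have hv := handshake G
  have e1 := gvol_eq G A
  have e2 := gvol_add G A
  rw [hv, div_le_iff₀ (by linarith)] at h
  have hAc : gvol G Aᶜ = 2 * edgecount G - gvol G A := by linarith
  rw [hAc] at h
  have hein : ein G A = (gvol G A - ecut G A Aᶜ) / 2 := by linarith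
  rw [sub_nonpos, div_le_div_iff₀ hm (by positivity), hein]
  nlinarith [mul_le_mul_of_nonneg_left h hm.le]

lemma forward (G : SimpleGraph V) (hm : 0 < edgecount G)
    (h : ∀ A : Finset V, gvol G A * gvol G Aᶜ / gvol G univ ≤ ecut G A Aᶜ)
    (P : Finpartition (univ : Finset V)) : modScore G P ≤ 0 := by
  rw [modScore_eq_sum]
  exact Finset.sum_nonpos fun A _ => term_nonpos G hm A (h A)

lemma backward (G : SimpleGraph V) (hm : 0 < edgecount G) (A : Finset V)
    (h1 : A.Nonempty) (h2 : A ≠ univ) (h : modScore G (bip A h1 h2) ≤ 0) :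
    gvol G A * gvol G Aᶜ / gvol G univ ≤ ecut G A Aᶜ := by
  have hne : A ≠ Aᶜ := by
    intro hEq
    obtain ⟨v, hv⟩ := h1
    exact (Finset.mem_compl.1 (hEq ▸ hv)) hv
  have hv := handshake G
  have e1 := gvol_eq G A
  have e1' := gvol_eq G Aᶜ
  rw [compl_compl, ecut_comm G Aᶜ A] at e1'
  have e2 := gvol_add G A
  rw [modScore_eq_sum, bip_parts, Finset.sum_pair hne] at h
  rw [hv, div_le_iff₀ (by linarith)]
  have h' := mul_nonpos_of_nonpos_of_nonneg h (by positivity :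
    (0:ℝ) ≤ 4 * edgecount G ^ 2)
  have hterm : (ein G A / edgecount G - gvol G A ^ 2 / (4 * edgecount G ^ 2)
      + (ein G Aᶜ / edgecount G - gvol G Aᶜ ^ 2 / (4 * edgecount G ^ 2)))
      * (4 * edgecount G ^ 2)
      = 4 * edgecount G * (ein G A + ein G Aᶜ) - (gvol G A ^ 2 + gvol G Aᶜ ^ 2) := by
    field_simp
    ring
  rw [hterm] at h'
  nlinarith [h', e1, e1', e2, hv]

lemma indiscrete_score (G : SimpleGraph V) (hm : 0 < edgecount G) (hV : Nonempty V) :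
    modScore G (Finpartition.indiscrete
      (by simp [bot_eq_empty, ← Finset.nonempty_iff_ne_empty] :
        (univ : Finset V) ≠ ⊥)) = 0 := by
  have hein : ein G (univ : Finset V) = edgecount G := by
    have := gvol_eq_ecut_univ G (univ : Finset V)
    have hv := handshake G
    unfold ein
    rw [← this, hv]; ring
  unfold modScore
  rw [Finpartition.indiscrete_parts, Finset.sum_singleton, Finset.sum_singleton, hein,
    handshake G]
  field_simp
  ring

lemma score_le_one (G : SimpleGraph V) (hm : 0 < edgecount G)
    (P : Finpartition (univ : Finset V)) : modScore G P ≤ 1 := by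
  have hsum : ∑ A ∈ P.parts, gvol G A = gvol G univ := by
    unfold gvol
    conv_rhs => rw [show (univ : Finset V) = P.parts.biUnion id from P.biUnion_parts.symm,
      Finset.sum_biUnion P.supIndep.pairwiseDisjoint]
    exact Finset.sum_congr rfl fun A _ => rfl
  have hein : ∀ A ∈ P.parts, ein G A ≤ gvol G A / 2 := by
    intro A _
    unfold ein
    have : ecut G A A ≤ ecut G A univ := by
      unfold ecut
      exact_mod_cast Finset.card_le_card
        (Finset.filter_subset_filter _ (Finset.product_subset_product_right (subset_univ A)))
    rw [gvol_eq_ecut_univ]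
    linarith
  have h1 : ∑ A ∈ P.parts, ein G A ≤ edgecount G := by
    calc ∑ A ∈ P.parts, ein G A ≤ ∑ A ∈ P.parts, gvol G A / 2 :=
          Finset.sum_le_sum hein
      _ = gvol G univ / 2 := by rw [← hsum, Finset.sum_div]
      _ = edgecount G := by rw [handshake G]; ring
  have h2 : (0:ℝ) ≤ ∑ A ∈ P.parts, gvol G A ^ 2 :=
    Finset.sum_nonneg fun A _ => sq_nonneg _
  unfold modScore
  have : (∑ A ∈ P.parts, ein G A) / edgecount G ≤ 1 := by
    rw [div_le_one hm]; exact h1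
  have h3 : 0 ≤ (∑ A ∈ P.parts, gvol G A ^ 2) / (4 * edgecount G ^ 2) :=
    div_nonneg h2 (by positivity)
  linarith

lemma key_iff (G : SimpleGraph V) (hG : G.edgeFinset.Nonempty) :
    modularity G = 0 ↔
      ∀ A : Finset V, gvol G A * gvol G Aᶜ / gvol G univ ≤ ecut G A Aᶜ := by
  have hm : 0 < edgecount G := gvol_univ_pos G hG
  have hV : Nonempty V := ⟨hG.choose.out.1⟩
  have h0 : (0:ℝ) ∈ { x | ∃ P : Finpartition (univ : Finset V), x = modScore G P } :=
    ⟨_, (indiscrete_score G hm hV).symm⟩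
  have hbdd : BddAbove { x | ∃ P : Finpartition (univ : Finset V), x = modScore G P } := by
    refine ⟨1, ?_⟩
    rintro x ⟨P, rfl⟩
    exact score_le_one G hm P
  constructor
  · intro hmod A
    by_cases hA1 : A.Nonempty
    · by_cases hA2 : A = univ
      · subst hA2
        rw [compl_univ]
        have : gvol G (∅ : Finset V) = 0 := by simp [gvol]
        rw [this, mul_zero, zero_div]
        exact ecut_nonneg _ _ _
      · have hmem : modScore G (bip A hA1 hA2)
            ∈ { x | ∃ P : Finpartition (univ : Finset V), x = modScore G P } := ⟨_, rfl⟩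
        have := le_csSup hbdd hmem
        rw [show sSup { x | ∃ P : Finpartition (univ : Finset V), x = modScore G P }
            = modularity G from rfl, hmod] at this
        exact backward G hm A hA1 hA2 this
    · rw [Finset.not_nonempty_iff_eq_empty] at hA1
      subst hA1
      have : gvol G (∅ : Finset V) = 0 := by simp [gvol]
      rw [this, zero_mul, zero_div]
      exact ecut_nonneg _ _ _
  · intro h
    refine le_antisymm ?_ (le_csSup hbdd h0)
    refine Real.sSup_le ?_ le_rfl
    rintro x ⟨P, rfl⟩
    exact forward G hm h P

lemma bc_iff (G : SimpleGraph V) (hG : G.edgeFinset.Nonempty) (A : Finset V) :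
    (2 * Real.sqrt (ein G A * ein G Aᶜ) ≤ ecut G A Aᶜ) ↔
      (gvol G A * gvol G Aᶜ / gvol G univ ≤ ecut G A Aᶜ) := by
  have hm : 0 < edgecount G := gvol_univ_pos G hG
  have hv := handshake G
  have e1 := gvol_eq G A
  have e1' := gvol_eq G Aᶜ
  rw [compl_compl, ecut_comm G Aᶜ A] at e1'
  have e2 := gvol_add G A
  have hc : 0 ≤ ecut G A Aᶜ := ecut_nonneg _ _ _
  have hpA := ein_nonneg G A
  have hpB := ein_nonneg G Aᶜ
  have hsq : Real.sqrt (4 * (ein G A * ein G Aᶜ))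
      = 2 * Real.sqrt (ein G A * ein G Aᶜ) := by
    rw [show (4:ℝ) * (ein G A * ein G Aᶜ) = 2 ^ 2 * (ein G A * ein G Aᶜ) by ring,
      Real.sqrt_mul (by positivity), Real.sqrt_sq (by norm_num : (0:ℝ) ≤ 2)]
  have hiff1 : (2 * Real.sqrt (ein G A * ein G Aᶜ) ≤ ecut G A Aᶜ) ↔
      4 * (ein G A * ein G Aᶜ) ≤ ecut G A Aᶜ ^ 2 := by
    rw [← hsq, Real.sqrt_le_iff]
    constructor
    · rintro ⟨_, h⟩; exact h
    · intro h; exact ⟨hc, h⟩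
  have hiff2 : (gvol G A * gvol G Aᶜ / gvol G univ ≤ ecut G A Aᶜ) ↔
      4 * (ein G A * ein G Aᶜ) ≤ ecut G A Aᶜ ^ 2 := by
    rw [hv, div_le_iff₀ (by linarith)]
    constructor <;> intro h <;> nlinarith [h, e1, e1', e2]
  rw [hiff1, hiff2]

/-- For a graph `G` with at least one edge, `q*(G) = 0` iff
`e(A,Ā) ≥ 2√(e(A)e(Ā))` for all `A`, iff `e(A,Ā) ≥ vol(A)vol(Ā)/vol(G)` for all `A`. -/
theorem stmt15 {V : Type*} [Fintype V] (G : SimpleGraph V) (hG : G.edgeFinset.Nonempty) :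
    (modularity G = 0 ↔
      ∀ A : Finset V, 2 * Real.sqrt (ein G A * ein G Aᶜ) ≤ ecut G A Aᶜ) ∧
    (modularity G = 0 ↔
      ∀ A : Finset V, gvol G A * gvol G Aᶜ / gvol G univ ≤ ecut G A Aᶜ) := by
  refine ⟨?_, key_iff G hG⟩
  rw [key_iff G hG]
  exact forall_congr' fun A => (bc_iff G hG A).symm
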